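/- arXiv:1302.6164 — 2 statements merged into one kernel-verified Lean document; each statement's English description precedes it below -/
import Mathlib

section
/- Let K be an o-symmetric plane convex body with norm ‖·‖_K. For x, y on the boundary of K, x is Birkhoff-orthogonal to y (x is parallel to a line supporting K at y) if and only if area(conv{o, x, y}) = max{area(conv{o, x, z}) : z ∈ K}. -/
open MeasureTheory Metric Pointwise

/-- Volume of the k-dimensional Euclidean unit ball. -/
noncomputable def ubVol (k : ℕ) : ℝ :=
  (volume (closedBall (0 : EuclideanSpace ℝ (Fin k)) 1)).toReal

/-- (n-1)-dimensional volume of the orthogonal projection of `K` onto the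
hyperplane through the origin perpendicular to `u`. -/
noncomputable def projVol {n : ℕ} (K : Set (EuclideanSpace ℝ (Fin n)))
    (u : EuclideanSpace ℝ (Fin n)) : ℝ :=
  (volume ((Submodule.orthogonalProjectionOnto (ℝ ∙ u)ᗮ) '' K)).toReal

/-- Length of a maximal chord of `K` parallel to `u`:
`d_K(u) = max {t ≥ 0 : K ∩ (t • u + K) ≠ ∅}`. -/
noncomputable def maxChord {n : ℕ} (K : Set (EuclideanSpace ℝ (Fin n)))
    (u : EuclideanSpace ℝ (Fin n)) : ℝ :=
  sSup {t : ℝ | 0 ≤ t ∧ (K ∩ ((t • u) +ᵥ K)).Nonempty}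

/-- Support function of `K`. -/
noncomputable def suppFn {n : ℕ} (K : Set (EuclideanSpace ℝ (Fin n)))
    (u : EuclideanSpace ℝ (Fin n)) : ℝ :=
  sSup ((fun x => (inner ℝ x u : ℝ)) '' K)

/-- Width of `K` in direction `u` (for a unit vector `u`). -/
noncomputable def widthFn {n : ℕ} (K : Set (EuclideanSpace ℝ (Fin n)))
    (u : EuclideanSpace ℝ (Fin n)) : ℝ :=
  suppFn K u + suppFn K (-u)

/-- Two sets touch: they intersect, but their interiors are disjoint. -/
def Touching {n : ℕ} (A B : Set (EuclideanSpace ℝ (Fin n))) : Prop :=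
  (A ∩ B).Nonempty ∧ Disjoint (interior A) (interior B)

/-- A convex body: compact, convex, with nonempty interior. -/
def IsConvexBody {n : ℕ} (K : Set (EuclideanSpace ℝ (Fin n))) : Prop :=
  Convex ℝ K ∧ IsCompact K ∧ (interior K).Nonempty

/-- An ellipsoid: the image of the unit ball under an invertible affine map. -/
def IsEllipsoid {n : ℕ} (K : Set (EuclideanSpace ℝ (Fin n))) : Prop :=
  ∃ f : EuclideanSpace ℝ (Fin n) ≃ᵃ[ℝ] EuclideanSpace ℝ (Fin n),
    K = f '' closedBall 0 1

/-- `x` is Birkhoff-orthogonal to `y` w.r.t. the body `K`: the line through `y` with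
direction `x` supports `K` at `y`. -/
def BirkhoffOrth (K : Set (EuclideanSpace ℝ (Fin 2))) (x y : EuclideanSpace ℝ (Fin 2)) : Prop :=
  y ∈ K ∧ ∀ t : ℝ, y + t • x ∉ interior K


section BirkhoffAux

abbrev E2 := EuclideanSpace ℝ (Fin 2)
noncomputable def fdet (x z : E2) : ℝ := x 0 * z 1 - x 1 * z 0
lemma fdet_add (x p q : E2) : fdet x (p+q) = fdet x p + fdet x q := by
  simp only [fdet, PiLp.add_apply]; ring
lemma fdet_smul (x : E2) (s : ℝ) (z : E2) : fdet x (s•z) = s * fdet x z := by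
  simp only [fdet, PiLp.smul_apply, smul_eq_mul]; ring
lemma fdet_neg (x z : E2) : fdet x (-z) = - fdet x z := by
  simp only [fdet, PiLp.neg_apply]; ring
lemma fdet_zero (x : E2) : fdet x 0 = 0 := by simp [fdet]
lemma fdet_self (x : E2) : fdet x x = 0 := by simp only [fdet]; ring
lemma exists_coords (x : E2) (hx : x ≠ 0) : x 0 ≠ 0 ∨ x 1 ≠ 0 := by
  by_contra hc; push_neg at hc; apply hx; ext i; fin_cases i <;> simp [hc.1, hc.2]
lemma exists_t (x : E2) (hx : x ≠ 0) {y w : E2} (h : fdet x w = fdet x y) :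
    ∃ t : ℝ, w = y + t • x := by
  unfold fdet at h
  rcases exists_coords x hx with h0 | h1
  · refine ⟨(w 0 - y 0)/ x 0, ?_⟩
    ext i
    fin_cases i <;>
      (simp only [PiLp.add_apply, PiLp.smul_apply, smul_eq_mul, Fin.isValue, Fin.zero_eta, Fin.mk_one];
       field_simp; try nlinarith [h])
  · refine ⟨(w 1 - y 1)/ x 1, ?_⟩
    ext i
    fin_cases i <;>
      (simp only [PiLp.add_apply, PiLp.smul_apply, smul_eq_mul, Fin.isValue, Fin.zero_eta, Fin.mk_one];
       field_simp; try nlinarith [h])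


noncomputable def Tmap (x z : E2) : E2 →ₗ[ℝ] E2 where
  toFun v := v 0 • x + v 1 • z
  map_add' v w := by
    simp only [PiLp.add_apply, add_smul]; module
  map_smul' c v := by
    simp only [PiLp.smul_apply, smul_eq_mul, RingHom.id_apply, mul_smul, smul_add]

lemma Tmap_det (x z : E2) : (Tmap x z).det = fdet x z := by
  have := LinearMap.det_toMatrix (EuclideanSpace.basisFun (Fin 2) ℝ).toBasis (Tmap x z)
  rw [← this, Matrix.det_fin_two]
  simp [LinearMap.toMatrix_apply, Tmap, fdet, EuclideanSpace.basisFun_apply]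
  ring

noncomputable def triS : Set E2 :=
  convexHull ℝ {0, EuclideanSpace.single 0 1, EuclideanSpace.single 1 1}

lemma Tmap_image (x z : E2) :
    Tmap x z '' ({0, EuclideanSpace.single 0 1, EuclideanSpace.single 1 1} : Set E2)
      = {0, x, z} := by
  rw [Set.image_insert_eq, Set.image_insert_eq, Set.image_singleton]
  have h0 : Tmap x z 0 = 0 := by simp [Tmap]
  have h1 : Tmap x z (EuclideanSpace.single 0 1) = x := by
    simp [Tmap, EuclideanSpace.single_apply]
  have h2 : Tmap x z (EuclideanSpace.single 1 1) = z := by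
    simp [Tmap, EuclideanSpace.single_apply]
  rw [h0, h1, h2]

lemma vol_triangle (x z : E2) :
    volume (convexHull ℝ ({0, x, z} : Set E2))
      = ENNReal.ofReal |fdet x z| * volume triS := by
  rw [← Tmap_image x z, ← LinearMap.image_convexHull, ← triS,
    Measure.addHaar_image_linearMap, Tmap_det]

lemma triS_vol_pos : 0 < volume triS := by
  have hconv : Convex ℝ triS := convex_convexHull _ _
  have hspan : affineSpan ℝ triS = ⊤ := by
    rw [triS, affineSpan_convexHull, ← AffineSubspace.coe_eq_univ_iff,
      affineSpan_insert_zero]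
    have hr : ({EuclideanSpace.single 0 1, EuclideanSpace.single 1 1} : Set E2)
        = Set.range ((EuclideanSpace.basisFun (Fin 2) ℝ).toBasis) := by
      ext v
      simp only [Set.mem_insert_iff, Set.mem_singleton_iff, Set.mem_range]
      constructor
      · rintro (rfl | rfl)
        exacts [⟨0, by simp [EuclideanSpace.basisFun_apply]⟩,
          ⟨1, by simp [EuclideanSpace.basisFun_apply]⟩]
      · rintro ⟨i, rfl⟩
        fin_cases i <;> simp [EuclideanSpace.basisFun_apply]
    rw [hr, Module.Basis.span_eq]
    simp
  have hne : (interior triS).Nonempty := by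
    rw [hconv.interior_nonempty_iff_affineSpan_eq_top]
    exact hspan
  calc (0:ENNReal) < volume (interior triS) := isOpen_interior.measure_pos volume hne
    _ ≤ volume triS := measure_mono interior_subset

lemma triS_vol_lt_top : volume triS < ⊤ := by
  refine IsCompact.measure_lt_top ?_
  exact (Set.toFinite _).isCompact_convexHull (𝕜 := ℝ)

theorem key (K : Set E2)
    (hconv : Convex ℝ K) (hcomp : IsCompact K) (hint : (interior K).Nonempty)
    (hsymm : K = -K)
    (x y : E2) (hx : x ∈ frontier K) (hy : y ∈ frontier K) :
    (y ∈ K ∧ ∀ t : ℝ, y + t • x ∉ interior K) ↔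
      ∀ z ∈ K, |fdet x z| ≤ |fdet x y| := by
  have hKcl : IsClosed K := hcomp.isClosed
  have hIntSymm : ∀ w, w ∈ interior K → -w ∈ interior K := by
    intro w hw
    have hi : interior (-K) = -interior K := by
      rw [← Set.image_neg_eq_neg, ← Set.image_neg_eq_neg]
      exact ((Homeomorph.neg E2).image_interior K).symm
    have : interior K = -interior K := by conv_lhs => rw [hsymm, hi]
    rw [this]
    exact Set.neg_mem_neg.2 hw
  have hKSymm : ∀ w, w ∈ K → -w ∈ K := by
    intro w hw
    rw [hsymm]
    exact Set.neg_mem_neg.2 hw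
  have h0 : (0 : E2) ∈ interior K := by
    obtain ⟨a, ha⟩ := hint
    have h2 := (hconv.interior) ha (hIntSymm a ha)
      (by norm_num : (0:ℝ) ≤ 1/2) (by norm_num : (0:ℝ) ≤ 1/2) (by norm_num)
    rwa [smul_neg, add_neg_cancel] at h2
  have hxK : x ∈ K := hKcl.frontier_subset hx
  have hyK : y ∈ K := hKcl.frontier_subset hy
  have hxne : x ≠ 0 := by
    rintro rfl
    exact hx.2 h0
  constructor
  · rintro ⟨-, hB⟩ z hz
    -- f y ≠ 0
    have hfy : fdet x y ≠ 0 := by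
      intro hfy0
      obtain ⟨t, ht⟩ := exists_t x hxne (y := y) (w := 0) (by simp [fdet_zero, hfy0])
      exact hB t (ht ▸ h0)
    by_contra hlt
    push_neg at hlt
    set M := |fdet x y| with hM
    have hMpos : 0 < M := abs_pos.2 hfy
    -- get z' ∈ K with fdet x z' > M
    obtain ⟨z', hz'K, hz'⟩ : ∃ z', z' ∈ K ∧ M < fdet x z' := by
      rcases le_or_gt 0 (fdet x z) with hzp | hzn
      · exact ⟨z, hz, by rwa [abs_of_nonneg hzp] at hlt⟩
      · exact ⟨-z, hKSymm z hz, by rw [fdet_neg]; rwa [abs_of_neg hzn] at hlt⟩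
    have hz'pos : 0 < fdet x z' := lt_trans hMpos hz'
    set s : ℝ := M / fdet x z' with hs
    have hs0 : 0 < s := div_pos hMpos hz'pos
    have hs1 : s < 1 := (div_lt_one hz'pos).2 hz'
    have hw : (s • z' : E2) ∈ interior K := by
      apply hconv.openSegment_interior_self_subset_interior h0 hz'K
      exact ⟨1 - s, s, by linarith, hs0, by ring, by simp⟩
    have hfw : fdet x (s • z') = M := by
      rw [fdet_smul, hs, div_mul_cancel₀ _ (ne_of_gt hz'pos)]
    rcases abs_cases (fdet x y) with ⟨hc, -⟩ | ⟨hc, -⟩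
    · obtain ⟨t, ht⟩ := exists_t x hxne (y := y) (w := s • z') (by rw [hfw, hM, hc])
      exact hB t (ht ▸ hw)
    · obtain ⟨t, ht⟩ := exists_t x hxne (y := y) (w := -(s • z'))
        (by rw [fdet_neg, hfw, hM, hc, neg_neg])
      exact hB t (ht ▸ hIntSymm _ hw)
  · intro h
    refine ⟨hyK, fun t hcon => ?_⟩
    obtain ⟨v, hv⟩ : ∃ v : E2, fdet x v ≠ 0 := by
      rcases exists_coords x hxne with h0' | h1'
      · exact ⟨EuclideanSpace.single 1 1, by
          simpa [fdet, EuclideanSpace.single_apply] using h0'⟩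
      · exact ⟨EuclideanSpace.single 0 1, by
          simp [fdet, EuclideanSpace.single_apply]; simpa using h1'⟩
    set p : E2 := y + t • x with hp
    have hfp : fdet x p = fdet x y := by
      rw [hp, fdet_add, fdet_smul, fdet_self, mul_zero, add_zero]
    -- choose direction u
    set u : E2 := if 0 ≤ fdet x y * fdet x v then v else -v with hu
    have hfu : fdet x u ≠ 0 := by
      rw [hu]; split_ifs
      · exact hv
      · rw [fdet_neg]; simpa using hv
    have hsign : 0 ≤ fdet x y * fdet x u := by
      rw [hu]; split_ifs with hcase
      · exact hcase
      · rw [fdet_neg]; push_neg at hcase; nlinarith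
    -- small ε
    obtain ⟨δ, hδ0, hδ⟩ := Metric.isOpen_iff.1 isOpen_interior p hcon
    set ε : ℝ := δ / (‖u‖ + 1) with hε
    have hunorm : (0:ℝ) < ‖u‖ + 1 := by positivity
    have hε0 : 0 < ε := div_pos hδ0 hunorm
    have hmem : p + ε • u ∈ K := by
      apply interior_subset
      apply hδ
      rw [mem_ball, dist_eq_norm, add_sub_cancel_left, norm_smul, Real.norm_eq_abs,
        abs_of_pos hε0]
      calc ε * ‖u‖ < ε * (‖u‖ + 1) := by nlinarith
        _ = δ := by rw [hε]; field_simp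
    have hval := h _ hmem
    rw [fdet_add, hfp, fdet_smul] at hval
    -- |fy + ε * fu| ≤ |fy| with ε*fu ≠ 0 and fy*(ε*fu) ≥ 0 : contradiction
    have hd : ε * fdet x u ≠ 0 := mul_ne_zero (ne_of_gt hε0) hfu
    have hsd : 0 ≤ fdet x y * (ε * fdet x u) := by nlinarith
    rcases lt_trichotomy (fdet x y) 0 with hy0 | hy0 | hy0
    · have : ε * fdet x u < 0 := by
        rcases lt_trichotomy (ε * fdet x u) 0 with h'|h'|h'
        · exact h'
        · exact absurd h' hd
        · nlinarith
      rw [abs_of_neg hy0, abs_of_neg (by linarith)] at hval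
      linarith
    · rw [hy0, zero_add, abs_zero, abs_nonpos_iff] at hval
      exact hd hval
    · have : 0 < ε * fdet x u := by
        rcases lt_trichotomy (ε * fdet x u) 0 with h'|h'|h'
        · nlinarith
        · exact absurd h' hd
        · exact h'
      rw [abs_of_pos hy0, abs_of_pos (by linarith)] at hval
      linarith


end BirkhoffAux

/-- For boundary points of an o-symmetric plane convex body, `x ⊥_B y` iff the triangle
`conv{o,x,y}` has maximal area among triangles `conv{o,x,z}`, `z ∈ K`. -/
theorem birkhoffOrth_iff_triangle_area_max (K : Set (EuclideanSpace ℝ (Fin 2)))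
    (hK : IsConvexBody K) (hsymm : K = -K)
    (x y : EuclideanSpace ℝ (Fin 2)) (hx : x ∈ frontier K) (hy : y ∈ frontier K) :
    BirkhoffOrth K x y ↔
      ∀ z ∈ K, (volume (convexHull ℝ ({0, x, z} : Set (EuclideanSpace ℝ (Fin 2))))).toReal
        ≤ (volume (convexHull ℝ ({0, x, y} : Set (EuclideanSpace ℝ (Fin 2))))).toReal := by
  obtain ⟨hconv, hcomp, hint⟩ := hK
  have hkey := key K hconv hcomp hint hsymm x y hx hy
  have harea : ∀ z : EuclideanSpace ℝ (Fin 2),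
      (volume (convexHull ℝ ({0, x, z} : Set (EuclideanSpace ℝ (Fin 2))))).toReal
        = |fdet x z| * (volume triS).toReal := by
    intro z
    rw [vol_triangle, ENNReal.toReal_mul, ENNReal.toReal_ofReal (abs_nonneg _)]
  have hc0 : 0 < (volume triS).toReal :=
    ENNReal.toReal_pos (ne_of_gt triS_vol_pos) (ne_of_lt triS_vol_lt_top)
  unfold BirkhoffOrth
  rw [hkey]
  constructor
  · intro h z hz
    rw [harea, harea]
    exact mul_le_mul_of_nonneg_right (h z hz) hc0.le
  · intro h z hz
    have h2 := h z hz
    rw [harea, harea] at h2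
    exact le_of_mul_le_mul_right h2 hc0
end

section
/- Define c_{n-1}(K) = (1/vol K) · max over supporting hyperplanes σ of K of vol(conv(K ∪ K_σ)), where K_σ is the mirror image of K in σ. For every convex body K in ℝⁿ, c_{n-1}(K) ≥ c^{tr}(K), where c^{tr}(K) is the corresponding maximum over touching translates of K. -/
open MeasureTheory Metric Pointwise

/-- Reflection in the hyperplane `{x : ⟪x,u⟫ = c}` (for a unit vector `u`). -/
noncomputable def reflHyp {n : ℕ} (c : ℝ) (u x : EuclideanSpace ℝ (Fin n)) :
    EuclideanSpace ℝ (Fin n) :=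
  x + (2 * (c - (inner ℝ x u : ℝ))) • u

/-- `c^{tr}(K)`: supremum of the normalized hull volume over touching translates. -/
noncomputable def ctr {n : ℕ} (K : Set (EuclideanSpace ℝ (Fin n))) : ℝ :=
  sSup {r : ℝ | ∃ v : EuclideanSpace ℝ (Fin n), Touching K (v +ᵥ K) ∧
    r = (volume (convexHull ℝ (K ∪ (v +ᵥ K)))).toReal / (volume K).toReal}

/-- `c_{n-1}(K)`: supremum of the normalized hull volume over reflections in supporting
hyperplanes (the supporting hyperplane with outer unit normal `u` is `{x : ⟪x,u⟫ = h_K(u)}`). -/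
noncomputable def crefl {n : ℕ} (K : Set (EuclideanSpace ℝ (Fin n))) : ℝ :=
  sSup {r : ℝ | ∃ u : EuclideanSpace ℝ (Fin n), ‖u‖ = 1 ∧
    r = (volume (convexHull ℝ (K ∪ (reflHyp (suppFn K u) u '' K)))).toReal / (volume K).toReal}

lemma convexHull_union_vadd {n : ℕ} {K : Set (EuclideanSpace ℝ (Fin n))} (hK : Convex ℝ K)
    (v : EuclideanSpace ℝ (Fin n)) :
    convexHull ℝ (K ∪ (v +ᵥ K)) = ⋃ s ∈ Set.Icc (0:ℝ) 1, ((s • v) +ᵥ K) := by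
  apply le_antisymm
  · apply convexHull_min
    · rintro x (hx | hx)
      · exact Set.mem_biUnion (Set.mem_Icc.2 ⟨le_refl 0, zero_le_one⟩) (by simpa using hx)
      · exact Set.mem_biUnion (Set.mem_Icc.2 ⟨zero_le_one, le_refl 1⟩) (by simpa using hx)
    · have : (⋃ s ∈ Set.Icc (0:ℝ) 1, ((s • v) +ᵥ K)) =
          (fun p : ℝ × EuclideanSpace ℝ (Fin n) => p.1 • v + p.2) '' (Set.Icc 0 1 ×ˢ K) := by
        ext x
        simp only [Set.mem_iUnion, Set.mem_image, Set.mem_prod, Prod.exists]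
        constructor
        · rintro ⟨s, hs, hx⟩
          rcases hx with ⟨k, hk, rfl⟩
          exact ⟨s, k, ⟨hs, hk⟩, by simp [add_comm]⟩
        · rintro ⟨s, k, ⟨hs, hk⟩, rfl⟩
          exact ⟨s, hs, ⟨k, hk, by simp [add_comm]⟩⟩
      rw [this]
      have hconv : Convex ℝ (Set.Icc (0:ℝ) 1 ×ˢ K) := (convex_Icc 0 1).prod hK
      exact hconv.linear_image
        ((LinearMap.fst ℝ ℝ _).smulRight v + LinearMap.snd ℝ ℝ _)
  · rintro x hx
    simp only [Set.mem_iUnion] at hx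
    obtain ⟨s, hs, k, hk, rfl⟩ := hx
    have h1 : k ∈ convexHull ℝ (K ∪ (v +ᵥ K)) := subset_convexHull ℝ _ (Or.inl hk)
    have h2 : v + k ∈ convexHull ℝ (K ∪ (v +ᵥ K)) := subset_convexHull ℝ _ (Or.inr ⟨k, hk, rfl⟩)
    have hc := (convex_convexHull ℝ (K ∪ (v +ᵥ K))) h1 h2
      (by linarith [hs.1, hs.2] : (0:ℝ) ≤ 1 - s) hs.1 (by ring)
    convert hc using 1
    show s • v + k = (1 - s) • k + s • (v + k)
    simp [smul_add, sub_smul]; abel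

lemma suppFn_le {n : ℕ} {K : Set (EuclideanSpace ℝ (Fin n))} (hKc : IsCompact K)
    {x : EuclideanSpace ℝ (Fin n)} (hx : x ∈ K) (u : EuclideanSpace ℝ (Fin n)) :
    (inner ℝ x u : ℝ) ≤ suppFn K u := by
  exact le_csSup ((hKc.image (continuous_id.inner continuous_const)).bddAbove) ⟨x, hx, rfl⟩

set_option maxHeartbeats 2000000 in
lemma two_vol_le {n : ℕ} (hn : 1 ≤ n) {K : Set (EuclideanSpace ℝ (Fin n))}
    (hKconv : Convex ℝ K) (hKcomp : IsCompact K) (hKne : K.Nonempty)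
    {u : EuclideanSpace ℝ (Fin n)} (hu : ‖u‖ = 1) {d : ℝ} (hd0 : 0 ≤ d)
    (hdw : d ≤ suppFn K u + suppFn K (-u)) :
    2 * volume (convexHull ℝ (K ∪ ((d • u) +ᵥ K))) ≤
      volume (convexHull ℝ (K ∪ (reflHyp (suppFn K u) u '' K))) +
      volume (convexHull ℝ (K ∪ (reflHyp (suppFn K (-u)) (-u) '' K))) := by
  obtain ⟨m, rfl⟩ : ∃ m, n = m + 1 := ⟨n - 1, (Nat.succ_pred_eq_of_pos hn).symm⟩
  set h₁ := suppFn K u with hh₁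
  set h₂ := suppFn K (-u) with hh₂
  -- orthonormal basis with b 0 = u
  have hcard : Module.finrank ℝ (EuclideanSpace ℝ (Fin (m+1))) = Fintype.card (Fin (m+1)) := by
    simp
  have horth : Orthonormal ℝ (Set.restrict {(0 : Fin (m+1))} (fun _ => u)) := by
    constructor
    · intro i; exact hu
    · intro i j hij
      have hi := i.2; have hj := j.2
      simp only [Set.mem_singleton_iff] at hi hj
      exact absurd (Subtype.ext (hi.trans hj.symm)) hij
  obtain ⟨b, hb⟩ := horth.exists_orthonormalBasis_extension_of_card_eq hcard
  have hb0 : b 0 = u := hb 0 rfl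
  -- the coordinate map
  set ψ : EuclideanSpace ℝ (Fin (m+1)) → ℝ × (Fin m → ℝ) :=
    fun x => (b.repr x 0, fun j => b.repr x j.succ) with hψdef
  set Ψ : EuclideanSpace ℝ (Fin (m+1)) ≃ᵐ ℝ × (Fin m → ℝ) :=
    (b.repr.toHomeomorph.toMeasurableEquiv).trans
      (((MeasurableEquiv.toLp 2 (Fin (m+1) → ℝ)).symm).trans
        (MeasurableEquiv.piFinSuccAbove (fun _ : Fin (m+1) => ℝ) 0)) with hΨdef
  have hψΨ : (Ψ : EuclideanSpace ℝ (Fin (m+1)) → ℝ × (Fin m → ℝ)) = ψ := by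
    funext x
    show (MeasurableEquiv.piFinSuccAbove (fun _ : Fin (m+1) => ℝ) 0)
      (((MeasurableEquiv.toLp 2 (Fin (m+1) → ℝ)).symm) (b.repr x)) = _
    refine Prod.ext rfl ?_
    funext j
    show b.repr x ((0 : Fin (m+1)).succAbove j) = _
    rw [Fin.succAbove_zero]
  have hΨmp : MeasurePreserving Ψ := by
    rw [hΨdef]
    have h3 := MeasureTheory.volume_preserving_piFinSuccAbove (fun _ : Fin (m+1) => ℝ) 0
    have h2 := EuclideanSpace.volume_preserving_symm_measurableEquiv_toLp (Fin (m+1))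
    have h1 := b.measurePreserving_repr
    exact (h3.comp h2).comp h1
  have hvol : ∀ S : Set (EuclideanSpace ℝ (Fin (m+1))), NullMeasurableSet S volume → volume (ψ '' S) = volume S := by
    intro S hS
    rw [← hψΨ, MeasurableEquiv.image_eq_preimage_symm]
    exact (MeasurePreserving.symm Ψ hΨmp).measure_preimage hS
  -- ψ basics
  have hψ1 : ∀ x : EuclideanSpace ℝ (Fin (m+1)), (ψ x).1 = (inner ℝ x u : ℝ) := by
    intro x
    show b.repr x 0 = (inner ℝ x u : ℝ)
    rw [b.repr_apply_apply, hb0, real_inner_comm]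
  have hreprU : b.repr u = EuclideanSpace.single 0 (1:ℝ) := by
    rw [← hb0, b.repr_self]
  have hψadd : ∀ (x : EuclideanSpace ℝ (Fin (m+1))) (t : ℝ), ψ (x + t • u) = ((ψ x).1 + t, (ψ x).2) := by
    intro x t
    have hmap : b.repr (x + t • u) = b.repr x + t • b.repr u := by
      simp [b.repr.map_add, b.repr.map_smul]
    refine Prod.ext ?_ ?_
    · show b.repr (x + t • u) 0 = b.repr x 0 + t
      rw [hmap]
      simp [hreprU, EuclideanSpace.single_apply]
    · funext j
      show b.repr (x + t • u) j.succ = b.repr x j.succ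
      rw [hmap]
      simp [hreprU, EuclideanSpace.single_apply, Fin.succ_ne_zero]
  have hψcont : Continuous ψ := by
    apply Continuous.prodMk
    · exact (EuclideanSpace.proj (0 : Fin (m+1))).continuous.comp b.repr.continuous
    · exact continuous_pi fun j =>
        (EuclideanSpace.proj (j.succ : Fin (m+1))).continuous.comp b.repr.continuous
  -- the three sets
  set hullC := convexHull ℝ (K ∪ ((d • u) +ᵥ K)) with hhullC
  set hullT := convexHull ℝ (K ∪ (reflHyp h₁ u '' K)) with hhullT
  set hullB := convexHull ℝ (K ∪ (reflHyp h₂ (-u) '' K)) with hhullB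
  set T₀ := (fun p : ℝ × EuclideanSpace ℝ (Fin (m+1)) =>
      p.2 + (p.1 * (2 * (h₁ - (inner ℝ p.2 u : ℝ)))) • u) '' (Set.Icc (0:ℝ) 1 ×ˢ K) with hT₀def
  set B₀ := (fun p : ℝ × EuclideanSpace ℝ (Fin (m+1)) =>
      p.2 + (p.1 * (2 * (h₂ - (inner ℝ p.2 (-u) : ℝ)))) • (-u)) '' (Set.Icc (0:ℝ) 1 ×ˢ K) with hB₀def
  -- T₀ ⊆ hullT, B₀ ⊆ hullB
  have hT₀sub : T₀ ⊆ hullT := by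
    rintro _ ⟨⟨s, x⟩, ⟨hs, hx⟩, rfl⟩
    have h1 : x ∈ hullT := subset_convexHull ℝ _ (Or.inl hx)
    have h2 : reflHyp h₁ u x ∈ hullT := subset_convexHull ℝ _ (Or.inr ⟨x, hx, rfl⟩)
    have h3 := (convex_convexHull ℝ (K ∪ (reflHyp h₁ u '' K))).add_smul_sub_mem h1 h2 hs
    have h4 : reflHyp h₁ u x - x = (2 * (h₁ - (inner ℝ x u : ℝ))) • u := by
      rw [reflHyp]; abel
    rw [h4, smul_smul] at h3
    exact h3
  have hB₀sub : B₀ ⊆ hullB := by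
    rintro _ ⟨⟨s, x⟩, ⟨hs, hx⟩, rfl⟩
    have h1 : x ∈ hullB := subset_convexHull ℝ _ (Or.inl hx)
    have h2 : reflHyp h₂ (-u) x ∈ hullB := subset_convexHull ℝ _ (Or.inr ⟨x, hx, rfl⟩)
    have h3 := (convex_convexHull ℝ (K ∪ (reflHyp h₂ (-u) '' K))).add_smul_sub_mem h1 h2 hs
    have h4 : reflHyp h₂ (-u) x - x = (2 * (h₂ - (inner ℝ x (-u) : ℝ))) • (-u) := by
      rw [reflHyp]; abel
    rw [h4, smul_smul] at h3
    exact h3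
  -- compactness
  have hicc : IsCompact (Set.Icc (0:ℝ) 1 ×ˢ K) := isCompact_Icc.prod hKcomp
  have hcont1 : Continuous (fun p : ℝ × EuclideanSpace ℝ (Fin (m+1)) =>
      p.2 + (p.1 * (2 * (h₁ - (inner ℝ p.2 u : ℝ)))) • u) :=
    continuous_snd.add ((continuous_fst.mul (continuous_const.mul
      (continuous_const.sub (continuous_snd.inner continuous_const)))).smul continuous_const)
  have hcont2 : Continuous (fun p : ℝ × EuclideanSpace ℝ (Fin (m+1)) =>
      p.2 + (p.1 * (2 * (h₂ - (inner ℝ p.2 (-u) : ℝ)))) • (-u)) :=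
    continuous_snd.add ((continuous_fst.mul (continuous_const.mul
      (continuous_const.sub (continuous_snd.inner continuous_const)))).smul continuous_const)
  have hT₀comp : IsCompact T₀ := hicc.image hcont1
  have hB₀comp : IsCompact B₀ := hicc.image hcont2
  have hCeq : hullC = (fun p : ℝ × EuclideanSpace ℝ (Fin (m+1)) =>
      p.1 • (d • u) + p.2) '' (Set.Icc (0:ℝ) 1 ×ˢ K) := by
    rw [hhullC, convexHull_union_vadd hKconv]
    ext x
    simp only [Set.mem_iUnion, Set.mem_image, Set.mem_prod, Prod.exists]
    constructor
    · rintro ⟨s, hs, k, hk, rfl⟩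
      exact ⟨s, k, ⟨hs, hk⟩, by simp [add_comm]⟩
    · rintro ⟨s, k, ⟨hs, hk⟩, rfl⟩
      exact ⟨s, hs, k, hk, by simp [add_comm]⟩
  have hCcomp : IsCompact hullC := by
    rw [hCeq]; exact hicc.image (by fun_prop)
  -- membership decomposition for hullC
  have hCmem : ∀ z ∈ hullC, ∃ k ∈ K, ∃ s : ℝ, 0 ≤ s ∧ s ≤ d ∧ z = k + s • u := by
    intro z hz
    rw [hCeq] at hz
    obtain ⟨⟨s, k⟩, ⟨hs, hk⟩, rfl⟩ := hz
    refine ⟨k, hk, s * d, mul_nonneg hs.1 hd0, ?_, ?_⟩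
    · calc s * d ≤ 1 * d := by
            exact mul_le_mul_of_nonneg_right hs.2 hd0
        _ = d := one_mul d
    · show s • d • u + k = k + (s * d) • u
      rw [smul_smul]; abel
  -- measurability of images
  have hCm : MeasurableSet (ψ '' hullC) := ((hCcomp.image hψcont).isClosed).measurableSet
  have hTm : MeasurableSet (ψ '' T₀) := ((hT₀comp.image hψcont).isClosed).measurableSet
  have hBm : MeasurableSet (ψ '' B₀) := ((hB₀comp.image hψcont).isClosed).measurableSet
  -- sections formula
  have hsec : ∀ S : Set (ℝ × (Fin m → ℝ)), MeasurableSet S →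
      volume S = ∫⁻ y, volume ((fun t => (t, y)) ⁻¹' S) := by
    intro S hS
    rw [Measure.volume_eq_prod, Measure.prod_apply_symm hS]
  -- the fiberwise inequality
  have hfiber : ∀ y : Fin m → ℝ,
      2 * volume ((fun t => (t, y)) ⁻¹' (ψ '' hullC)) ≤
        volume ((fun t => (t, y)) ⁻¹' (ψ '' T₀)) +
        volume ((fun t => (t, y)) ⁻¹' (ψ '' B₀)) := by
    intro y
    set Ay := (fun t : ℝ => (t, y)) ⁻¹' (ψ '' K) with hAydef
    have hCfib : ∀ t : ℝ, (t, y) ∈ ψ '' hullC → ∃ t' ∈ Ay, ∃ s : ℝ, 0 ≤ s ∧ s ≤ d ∧ t = t' + s := by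
      intro t ht
      obtain ⟨z, hz, hψz⟩ := ht
      obtain ⟨k, hk, s, hs0, hsd, rfl⟩ := hCmem z hz
      rw [hψadd] at hψz
      have h2 : (ψ k).2 = y := congrArg Prod.snd hψz
      have h1 : (ψ k).1 + s = t := congrArg Prod.fst hψz
      refine ⟨(ψ k).1, ?_, s, hs0, hsd, h1.symm⟩
      show ((ψ k).1, y) ∈ ψ '' K
      rw [← h2]
      exact ⟨k, hk, rfl⟩
    rcases Set.eq_empty_or_nonempty Ay with hAe | hAne
    · have hCe : (fun t : ℝ => (t, y)) ⁻¹' (ψ '' hullC) = ∅ := by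
        ext t
        simp only [Set.mem_preimage, Set.mem_empty_iff_false, iff_false]
        intro ht
        obtain ⟨t', ht', _⟩ := hCfib t ht
        rw [hAe] at ht'
        exact ht'
      rw [hCe]
      simp
    · -- Ay compact
      have hAcl : IsClosed Ay :=
        ((hKcomp.image hψcont).isClosed).preimage (Continuous.prodMk_left y)
      have hAsub : Ay ⊆ Prod.fst '' (ψ '' K) := by
        intro t ht
        exact ⟨(t, y), ht, rfl⟩
      have hAcomp : IsCompact Ay :=
        IsCompact.of_isClosed_subset ((hKcomp.image hψcont).image continuous_fst) hAcl hAsub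
      set a := sInf Ay with hadef
      set b' := sSup Ay with hbdef
      have ha : a ∈ Ay := hAcomp.sInf_mem hAne
      have hb : b' ∈ Ay := hAcomp.sSup_mem hAne
      obtain ⟨xa, hxaK, hxa⟩ := ha
      obtain ⟨xb, hxbK, hxb⟩ := hb
      have hxa1 : (inner ℝ xa u : ℝ) = a := by rw [← hψ1]; rw [hxa]
      have hxb1 : (inner ℝ xb u : ℝ) = b' := by rw [← hψ1]; rw [hxb]
      have hah : a ≤ h₁ := by rw [← hxa1, hh₁]; exact suppFn_le hKcomp hxaK u
      have hbh : -b' ≤ h₂ := by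
        have := suppFn_le hKcomp hxbK (-u)
        rw [inner_neg_right, hxb1] at this
        rw [hh₂]
        exact this
      have hab : a ≤ b' := csInf_le_csSup hAne hAcomp.bddBelow hAcomp.bddAbove
      -- T fiber
      have hTfib : Set.Icc a (2*h₁ - a) ⊆ (fun t : ℝ => (t, y)) ⁻¹' (ψ '' T₀) := by
        intro t ht
        have hr0 : 0 ≤ t - a := by linarith [ht.1]
        have hrc : t - a ≤ 2 * (h₁ - a) := by have := ht.2; linarith
        obtain ⟨s, hs, hseq⟩ : ∃ s : ℝ, s ∈ Set.Icc (0:ℝ) 1 ∧ s * (2 * (h₁ - a)) = t - a := by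
          rcases eq_or_lt_of_le hah with heq | hlt
          · refine ⟨0, ⟨le_refl 0, zero_le_one⟩, ?_⟩
            have : t - a = 0 := le_antisymm (by rw [← heq] at hrc; linarith) hr0
            rw [this]; ring
          · refine ⟨(t - a) / (2 * (h₁ - a)), ⟨div_nonneg hr0 (by linarith), ?_⟩, ?_⟩
            · rw [div_le_one (by linarith)]; exact hrc
            · exact div_mul_cancel₀ _ (by linarith)
        have hz : xa + (s * (2 * (h₁ - (inner ℝ xa u : ℝ)))) • u ∈ T₀ :=
          ⟨(s, xa), ⟨hs, hxaK⟩, rfl⟩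
        show (t, y) ∈ ψ '' T₀
        refine ⟨_, hz, ?_⟩
        rw [hψadd, hxa1, hseq, hxa]
        show (a + (t - a), y) = (t, y)
        norm_num
      -- B fiber
      have hBfib : Set.Icc (-(2*h₂) - b') b' ⊆ (fun t : ℝ => (t, y)) ⁻¹' (ψ '' B₀) := by
        intro t ht
        have hr0 : 0 ≤ b' - t := by linarith [ht.2]
        have hrc : b' - t ≤ 2 * (h₂ + b') := by have := ht.1; linarith
        obtain ⟨s, hs, hseq⟩ : ∃ s : ℝ, s ∈ Set.Icc (0:ℝ) 1 ∧ s * (2 * (h₂ + b')) = b' - t := by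
          rcases eq_or_lt_of_le hbh with heq | hlt
          · refine ⟨0, ⟨le_refl 0, zero_le_one⟩, ?_⟩
            have : b' - t = 0 := le_antisymm (by rw [← heq] at hrc; linarith) hr0
            rw [this]; ring
          · refine ⟨(b' - t) / (2 * (h₂ + b')), ⟨div_nonneg hr0 (by linarith), ?_⟩, ?_⟩
            · rw [div_le_one (by linarith)]; exact hrc
            · exact div_mul_cancel₀ _ (by linarith)
        have hz : xb + (s * (2 * (h₂ - (inner ℝ xb (-u) : ℝ)))) • (-u) ∈ B₀ :=
          ⟨(s, xb), ⟨hs, hxbK⟩, rfl⟩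
        show (t, y) ∈ ψ '' B₀
        refine ⟨_, hz, ?_⟩
        have hcoef : (s * (2 * (h₂ - (inner ℝ xb (-u) : ℝ)))) • (-u) =
            (-(s * (2 * (h₂ + b')))) • u := by
          rw [inner_neg_right, hxb1, smul_neg, ← neg_smul]
          ring_nf
        rw [hcoef, hψadd, hseq, hxb]
        show (b' + -(b' - t), y) = (t, y)
        norm_num
      -- C fiber subset
      have hCsub : (fun t : ℝ => (t, y)) ⁻¹' (ψ '' hullC) ⊆ Set.Icc a (b' + d) := by
        intro t ht
        obtain ⟨t', ht', s, hs0, hsd, rfl⟩ := hCfib t ht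
        have h1 : a ≤ t' := csInf_le hAcomp.bddBelow ht'
        have h2 : t' ≤ b' := le_csSup hAcomp.bddAbove ht'
        exact ⟨by linarith, by linarith⟩
      -- put together
      calc 2 * volume ((fun t : ℝ => (t, y)) ⁻¹' (ψ '' hullC))
          ≤ 2 * volume (Set.Icc a (b' + d)) := by
            exact mul_le_mul_right (measure_mono hCsub) 2
        _ = 2 * ENNReal.ofReal (b' + d - a) := by rw [Real.volume_Icc]
        _ = ENNReal.ofReal (2 * (b' + d - a)) := by
            rw [← ENNReal.ofReal_ofNat 2, ← ENNReal.ofReal_mul (by norm_num)]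
        _ ≤ ENNReal.ofReal ((2*h₁ - a - a) + (b' - (-(2*h₂) - b'))) := by
            apply ENNReal.ofReal_le_ofReal
            linarith [hdw]
        _ = ENNReal.ofReal (2*h₁ - a - a) + ENNReal.ofReal (b' - (-(2*h₂) - b')) := by
            rw [ENNReal.ofReal_add (by linarith) (by linarith)]
        _ ≤ volume ((fun t : ℝ => (t, y)) ⁻¹' (ψ '' T₀)) +
            volume ((fun t : ℝ => (t, y)) ⁻¹' (ψ '' B₀)) := by
            apply add_le_add
            · calc ENNReal.ofReal (2*h₁ - a - a) = volume (Set.Icc a (2*h₁ - a)) := by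
                    rw [Real.volume_Icc]
                _ ≤ _ := measure_mono hTfib
            · calc ENNReal.ofReal (b' - (-(2*h₂) - b')) = volume (Set.Icc (-(2*h₂) - b') b') := by
                    rw [Real.volume_Icc]
                _ ≤ _ := measure_mono hBfib
  -- integrate
  have h2C : 2 * volume hullC ≤ volume T₀ + volume B₀ := by
    rw [← hvol _ hCcomp.isClosed.measurableSet.nullMeasurableSet,
        ← hvol _ hT₀comp.isClosed.measurableSet.nullMeasurableSet,
        ← hvol _ hB₀comp.isClosed.measurableSet.nullMeasurableSet]
    rw [hsec _ hCm, hsec _ hTm, hsec _ hBm]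
    rw [← MeasureTheory.lintegral_const_mul 2 (measurable_measure_prodMk_right hCm)]
    rw [← MeasureTheory.lintegral_add_left (measurable_measure_prodMk_right hTm)]
    exact lintegral_mono hfiber
  calc 2 * volume hullC ≤ volume T₀ + volume B₀ := h2C
    _ ≤ volume hullT + volume hullB := add_le_add (measure_mono hT₀sub) (measure_mono hB₀sub)

lemma div_le_div_of_nonneg_right' {a b c : ℝ} (hab : a ≤ b) (hc : 0 < c) :
    a / c ≤ b / c := by
  rw [div_le_div_iff₀ hc hc]
  nlinarith

set_option maxHeartbeats 1000000 in
/-- For every convex body, `c_{n-1}(K) ≥ c^{tr}(K)`. -/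
theorem crefl_ge_ctr {n : ℕ} (hn : 1 ≤ n)
    (K : Set (EuclideanSpace ℝ (Fin n))) (hK : IsConvexBody K) :
    crefl K ≥ ctr K := by
  obtain ⟨hKconv, hKcomp, hKint⟩ := hK
  have hKne : K.Nonempty := hKint.mono interior_subset
  have hvolpos : 0 < volume K :=
    lt_of_lt_of_le (isOpen_interior.measure_pos volume hKint) (measure_mono interior_subset)
  have hvolfin : volume K ≠ ⊤ := hKcomp.measure_lt_top.ne
  have hvolKtR : 0 < (volume K).toReal := ENNReal.toReal_pos hvolpos.ne' hvolfin
  obtain ⟨R, hR0, hRsub⟩ := hKcomp.isBounded.subset_closedBall_lt 0 0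
  have hnormK : ∀ x ∈ K, ‖x‖ ≤ R := fun x hx => by
    have := hRsub hx
    rwa [mem_closedBall, dist_zero_right] at this
  have hsuppB : ∀ w : EuclideanSpace ℝ (Fin n), ‖w‖ = 1 → |suppFn K w| ≤ R := by
    intro w hw
    rw [abs_le]
    constructor
    · obtain ⟨x₀, hx₀⟩ := hKne
      refine le_trans ?_ (suppFn_le hKcomp hx₀ w)
      have h1 := abs_real_inner_le_norm x₀ w
      rw [hw, mul_one] at h1
      have h2 := (abs_le.1 h1).1
      linarith [hnormK x₀ hx₀]
    · apply csSup_le (hKne.image _)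
      rintro r ⟨x, hx, rfl⟩
      have h1 := abs_real_inner_le_norm x w
      rw [hw, mul_one] at h1
      have h2 := (abs_le.1 h1).2
      have h3 := hnormK x hx
      simpa using le_trans h2 h3
  have hhullball : ∀ w : EuclideanSpace ℝ (Fin n), ‖w‖ = 1 →
      convexHull ℝ (K ∪ (reflHyp (suppFn K w) w '' K)) ⊆ closedBall 0 (5*R) := by
    intro w hw
    apply convexHull_min _ (convex_closedBall 0 (5*R))
    rintro z (hz | ⟨x, hx, rfl⟩)
    · rw [mem_closedBall, dist_zero_right]
      have := hnormK z hz
      linarith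
    · rw [mem_closedBall, dist_zero_right, reflHyp]
      have h1 : ‖x + (2 * (suppFn K w - (inner ℝ x w : ℝ))) • w‖ ≤
          ‖x‖ + |2 * (suppFn K w - (inner ℝ x w : ℝ))| * ‖w‖ := by
        refine le_trans (norm_add_le _ _) ?_
        rw [norm_smul, Real.norm_eq_abs]
      have h2 : |(inner ℝ x w : ℝ)| ≤ R := by
        have := abs_real_inner_le_norm x w
        rw [hw, mul_one] at this
        linarith [hnormK x hx]
      have h3 := hsuppB w hw
      have h4 : |2 * (suppFn K w - (inner ℝ x w : ℝ))| ≤ 2 * (R + R) := by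
        have ha := abs_le.1 h3
        have hb := abs_le.1 h2
        rw [abs_mul, abs_two]
        have hc : |suppFn K w - (inner ℝ x w : ℝ)| ≤ R + R :=
          abs_le.2 ⟨by linarith [ha.1, hb.2], by linarith [ha.2, hb.1]⟩
        linarith
      have h5 := hnormK x hx
      rw [hw, mul_one] at h1
      linarith
  set S := {r : ℝ | ∃ u : EuclideanSpace ℝ (Fin n), ‖u‖ = 1 ∧
    r = (volume (convexHull ℝ (K ∪ (reflHyp (suppFn K u) u '' K)))).toReal /
        (volume K).toReal} with hSdef
  have hcreflS : crefl K = sSup S := rfl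
  have hSbdd : BddAbove S := by
    refine ⟨(volume (closedBall (0 : EuclideanSpace ℝ (Fin n)) (5*R))).toReal /
      (volume K).toReal, ?_⟩
    rintro r ⟨w, hw, rfl⟩
    have hnum : (volume (convexHull ℝ (K ∪ (reflHyp (suppFn K w) w '' K)))).toReal ≤
        (volume (closedBall (0 : EuclideanSpace ℝ (Fin n)) (5*R))).toReal :=
      ENNReal.toReal_mono measure_closedBall_lt_top.ne (measure_mono (hhullball w hw))
    exact div_le_div_of_nonneg_right' hnum hvolKtR
  have hcrefl0 : 0 ≤ crefl K := by
    rw [hcreflS]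
    have hu₀ : ‖EuclideanSpace.single (⟨0, hn⟩ : Fin n) (1:ℝ)‖ = 1 := by
      rw [EuclideanSpace.norm_single]; norm_num
    refine le_trans (div_nonneg ENNReal.toReal_nonneg ENNReal.toReal_nonneg)
      (le_csSup hSbdd ⟨EuclideanSpace.single (⟨0, hn⟩ : Fin n) (1:ℝ), hu₀, rfl⟩)
  rw [ge_iff_le]
  show sSup _ ≤ crefl K
  apply Real.sSup_le _ hcrefl0
  rintro r ⟨v, ⟨hint, hdis⟩, rfl⟩
  have hv0 : v ≠ 0 := by
    rintro rfl
    rw [zero_vadd] at hdis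
    rw [disjoint_self] at hdis
    exact hKint.ne_empty hdis
  have hd0 : 0 < ‖v‖ := norm_pos_iff.2 hv0
  set u : EuclideanSpace ℝ (Fin n) := ‖v‖⁻¹ • v with hudef
  have hu : ‖u‖ = 1 := norm_smul_inv_norm hv0
  have hdu : ‖v‖ • u = v := smul_inv_smul₀ hd0.ne' v
  have hinner_vu : (inner ℝ v u : ℝ) = ‖v‖ := by
    rw [hudef, real_inner_smul_right, real_inner_self_eq_norm_mul_norm]
    field_simp
  obtain ⟨x, hx1, hx2⟩ := hint
  obtain ⟨k, hkK, hkx⟩ := hx2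
  have h1 := suppFn_le hKcomp hx1 u
  have h2 := suppFn_le hKcomp hkK (-u)
  rw [inner_neg_right] at h2
  have hdw : ‖v‖ ≤ suppFn K u + suppFn K (-u) := by
    have hxvk : (inner ℝ x u : ℝ) = ‖v‖ + (inner ℝ k u : ℝ) := by
      rw [← hkx]
      show (inner ℝ (v + k) u : ℝ) = _
      rw [inner_add_left, hinner_vu]
    linarith
  have hkey := two_vol_le hn hKconv hKcomp hKne hu hd0.le hdw
  rw [hdu] at hkey
  have hnu : ‖-u‖ = 1 := by rw [norm_neg]; exact hu
  have hTfin : volume (convexHull ℝ (K ∪ (reflHyp (suppFn K u) u '' K))) ≠ ⊤ :=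
    (lt_of_le_of_lt (measure_mono (hhullball u hu)) measure_closedBall_lt_top).ne
  have hBfin : volume (convexHull ℝ (K ∪ (reflHyp (suppFn K (-u)) (-u) '' K))) ≠ ⊤ :=
    (lt_of_le_of_lt (measure_mono (hhullball (-u) hnu)) measure_closedBall_lt_top).ne
  rcases le_total (volume (convexHull ℝ (K ∪ (reflHyp (suppFn K u) u '' K))))
      (volume (convexHull ℝ (K ∪ (reflHyp (suppFn K (-u)) (-u) '' K)))) with hTB | hBT
  · have hCB : volume (convexHull ℝ (K ∪ (v +ᵥ K))) ≤
        volume (convexHull ℝ (K ∪ (reflHyp (suppFn K (-u)) (-u) '' K))) := by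
      have h2' : 2 * volume (convexHull ℝ (K ∪ (v +ᵥ K))) ≤
          2 * volume (convexHull ℝ (K ∪ (reflHyp (suppFn K (-u)) (-u) '' K))) := by
        refine le_trans hkey ?_
        rw [two_mul]
        exact add_le_add hTB le_rfl
      exact (ENNReal.mul_le_mul_iff_right (by norm_num) ENNReal.ofNat_ne_top).1 h2'
    have hr : (volume (convexHull ℝ (K ∪ (v +ᵥ K)))).toReal / (volume K).toReal ≤
        (volume (convexHull ℝ (K ∪ (reflHyp (suppFn K (-u)) (-u) '' K)))).toReal /
          (volume K).toReal :=
      div_le_div_of_nonneg_right' (ENNReal.toReal_mono hBfin hCB) hvolKtR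
    rw [hcreflS]
    exact le_trans hr (le_csSup hSbdd ⟨-u, hnu, rfl⟩)
  · have hCT : volume (convexHull ℝ (K ∪ (v +ᵥ K))) ≤
        volume (convexHull ℝ (K ∪ (reflHyp (suppFn K u) u '' K))) := by
      have h2' : 2 * volume (convexHull ℝ (K ∪ (v +ᵥ K))) ≤
          2 * volume (convexHull ℝ (K ∪ (reflHyp (suppFn K u) u '' K))) := by
        refine le_trans hkey ?_
        rw [two_mul]
        exact add_le_add le_rfl hBT
      exact (ENNReal.mul_le_mul_iff_right (by norm_num) ENNReal.ofNat_ne_top).1 h2'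
    have hr : (volume (convexHull ℝ (K ∪ (v +ᵥ K)))).toReal / (volume K).toReal ≤
        (volume (convexHull ℝ (K ∪ (reflHyp (suppFn K u) u '' K)))).toReal /
          (volume K).toReal :=
      div_le_div_of_nonneg_right' (ENNReal.toReal_mono hTfin hCT) hvolKtR
    rw [hcreflS]
    exact le_trans hr (le_csSup hSbdd ⟨u, hu, rfl⟩)
end
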